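/- Converse bound: let P, Q be orthogonal projections with Tr Q = D_ρ, G₂ = (1/D_ρ)Tr[PQ], σ² = (1/D_ρ)Tr[PQPQ] − G₂², and let 0 ≤ λ < 1. If for EVERY orthonormal basis {b_k} of range(Q) the fraction of indices with |⟨b_k, P b_k⟩ − G₂| > λ is at most f^max, then σ² ≤ λ² + (1 − λ²)·f^max. -/

import Mathlib

open Matrix Complex Finset
open scoped Classical

lemma dot_star_self_re {N : ℕ} (v : Fin N → ℂ) :
    (dotProduct (star v) v).re = ∑ i, Complex.normSq (v i) := by
  rw [dotProduct, Complex.re_sum]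
  refine Finset.sum_congr rfl fun i _ => ?_
  simp [Pi.star_apply, mul_comm, Complex.mul_conj]

lemma proj_dot_eq {N : ℕ} {P : Matrix (Fin N) (Fin N) ℂ}
    (hPh : P.IsHermitian) (hPi : P * P = P) (v : Fin N → ℂ) :
    dotProduct (star v) (P *ᵥ v)
      = dotProduct (star (P *ᵥ v)) (P *ᵥ v) := by
  conv_lhs => rw [← hPi, ← Matrix.mulVec_mulVec, Matrix.dotProduct_mulVec]
  congr 1
  rw [Matrix.star_mulVec, hPh.eq]

lemma proj_dot_re_nonneg {N : ℕ} {P : Matrix (Fin N) (Fin N) ℂ}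
    (hPh : P.IsHermitian) (hPi : P * P = P) (v : Fin N → ℂ) :
    0 ≤ (dotProduct (star v) (P *ᵥ v)).re := by
  rw [proj_dot_eq hPh hPi, dot_star_self_re]
  exact Finset.sum_nonneg fun i _ => Complex.normSq_nonneg _

lemma herm_trace {N : ℕ} {A : Matrix (Fin N) (Fin N) ℂ} (hA : A.IsHermitian) :
    A.trace = ∑ i, (hA.eigenvalues i : ℂ) := by
  conv_lhs => rw [hA.spectral_theorem, Unitary.conjStarAlgAut_apply]
  rw [Matrix.trace_mul_cycle, Matrix.mem_unitaryGroup_iff'.mp hA.eigenvectorUnitary.2,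
    Matrix.one_mul, Matrix.trace_diagonal]
  rfl

lemma herm_trace_sq {N : ℕ} {A : Matrix (Fin N) (Fin N) ℂ} (hA : A.IsHermitian) :
    (A * A).trace = ∑ i, (hA.eigenvalues i : ℂ) ^ 2 := by
  have hsU : star (hA.eigenvectorUnitary : Matrix (Fin N) (Fin N) ℂ) *
      (hA.eigenvectorUnitary : Matrix (Fin N) (Fin N) ℂ) = 1 :=
    Matrix.mem_unitaryGroup_iff'.mp hA.eigenvectorUnitary.2
  have h2 : A * A = (hA.eigenvectorUnitary : Matrix (Fin N) (Fin N) ℂ) *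
      (Matrix.diagonal (RCLike.ofReal ∘ hA.eigenvalues) *
        Matrix.diagonal (RCLike.ofReal ∘ hA.eigenvalues)) *
      star (hA.eigenvectorUnitary : Matrix (Fin N) (Fin N) ℂ) := by
    conv_lhs => rw [hA.spectral_theorem, Unitary.conjStarAlgAut_apply]
    simp only [Matrix.mul_assoc]
    rw [← Matrix.mul_assoc (star _) (hA.eigenvectorUnitary : Matrix (Fin N) (Fin N) ℂ), hsU,
      Matrix.one_mul]
  rw [h2, Matrix.trace_mul_cycle, ← Matrix.mul_assoc, hsU, Matrix.one_mul,
    Matrix.diagonal_mul_diagonal, Matrix.trace_diagonal]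
  refine Finset.sum_congr rfl fun i _ => ?_
  rw [sq]
  rfl

set_option maxHeartbeats 1600000 in
theorem stmt7 {N Dρ : ℕ} (hDρ : 0 < Dρ)
    (P Q : Matrix (Fin N) (Fin N) ℂ)
    (hPh : P.IsHermitian) (hPi : P * P = P)
    (hQh : Q.IsHermitian) (hQi : Q * Q = Q)
    (htrQ : Q.trace = (Dρ : ℂ))
    (G₂ σsq : ℝ)
    (hG : G₂ = ((P * Q).trace).re / Dρ)
    (hσ : σsq = ((P * Q * P * Q).trace).re / Dρ - G₂ ^ 2)
    (lam fmax : ℝ) (hlam0 : 0 ≤ lam) (hlam1 : lam < 1)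
    (hbasis : ∀ b : Fin Dρ → (Fin N → ℂ),
      (∀ k l, star (b k) ⬝ᵥ b l = if k = l then 1 else 0) →
      (∀ k, b k ∈ LinearMap.range Q.mulVecLin) →
      Submodule.span ℂ (Set.range b) = LinearMap.range Q.mulVecLin →
      ((Finset.univ.filter
          (fun k => lam < |(star (b k) ⬝ᵥ P.mulVec (b k)).re - G₂|)).card : ℝ) / Dρ
        ≤ fmax) :
    σsq ≤ lam ^ 2 + (1 - lam ^ 2) * fmax := by
  classical
  have hD0 : (0:ℝ) < (Dρ : ℝ) := by exact_mod_cast hDρ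
  set V := LinearMap.range Q.mulVecLin with hV
  -- rank of Q equals Dρ
  have hQrank : Q.rank = Dρ := by
    have hq01 : ∀ i, hQh.eigenvalues i = 0 ∨ hQh.eigenvalues i = 1 := by
      intro i
      have h1 := hQh.mulVec_eigenvectorBasis i
      have h2 : Q *ᵥ (Q *ᵥ ⇑(hQh.eigenvectorBasis i))
          = (hQh.eigenvalues i * hQh.eigenvalues i) • ⇑(hQh.eigenvectorBasis i) := by
        rw [h1, Matrix.mulVec_smul, h1, smul_smul]
      rw [Matrix.mulVec_mulVec, hQi, h1] at h2
      have hvne : ⇑(hQh.eigenvectorBasis i) ≠ (0 : Fin N → ℂ) := by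
        intro h
        exact hQh.eigenvectorBasis.orthonormal.ne_zero i (by ext j; exact congrFun h j)
      have h3 : (hQh.eigenvalues i * hQh.eigenvalues i - hQh.eigenvalues i) •
          ⇑(hQh.eigenvectorBasis i) = 0 := by
        rw [sub_smul, h2, sub_self]
      rcases smul_eq_zero.mp h3 with h | h
      · have h4 : hQh.eigenvalues i * (hQh.eigenvalues i - 1) = 0 := by linear_combination h
        rcases mul_eq_zero.mp h4 with h5 | h5
        · exact Or.inl h5
        · exact Or.inr (by linarith)
      · exact absurd h hvne
    have hre : (Dρ : ℝ) = ∑ i, hQh.eigenvalues i := by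
      have := congrArg Complex.re (htrQ.symm.trans (herm_trace hQh))
      simpa [Complex.re_sum] using this
    rw [hQh.rank_eq_card_non_zero_eigs, Fintype.card_subtype]
    have h6 : ∑ i, hQh.eigenvalues i
        = ∑ i ∈ Finset.univ.filter (fun i => hQh.eigenvalues i ≠ 0), hQh.eigenvalues i := by
      rw [Finset.sum_filter_ne_zero]
    have h7 : ∑ i ∈ Finset.univ.filter (fun i => hQh.eigenvalues i ≠ 0), hQh.eigenvalues i
        = ((Finset.univ.filter (fun i => hQh.eigenvalues i ≠ 0)).card : ℝ) := by
      rw [Finset.card_eq_sum_ones, Nat.cast_sum]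
      refine Finset.sum_congr rfl fun i hi => ?_
      rcases hq01 i with h | h
      · exact absurd h (Finset.mem_filter.mp hi).2
      · simp [h]
    have h8 : (Dρ : ℝ) = ((Finset.univ.filter (fun i => hQh.eigenvalues i ≠ 0)).card : ℝ) := by
      rw [hre, h6, h7]
    exact_mod_cast h8.symm
  -- the auxiliary matrix M
  set M := Q * P * Q + (2:ℂ) • Q with hMdef
  have hMfact : M = Q * (P * Q + (2:ℂ) • 1) := by
    rw [hMdef, Matrix.mul_add, ← Matrix.mul_assoc, mul_smul_comm, Matrix.mul_one]
  have hMh : M.IsHermitian := by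
    have h1 : (Q * P * Q).IsHermitian := by
      rw [Matrix.IsHermitian, Matrix.conjTranspose_mul, Matrix.conjTranspose_mul, hPh.eq,
        hQh.eq, ← Matrix.mul_assoc]
    have h2 : ((2:ℂ) • Q).IsHermitian := by
      rw [Matrix.IsHermitian, Matrix.conjTranspose_smul, hQh.eq]
      norm_num
    exact h1.add h2
  have hMrank : M.rank = Dρ := by
    have hrangeM_le : LinearMap.range M.mulVecLin ≤ V := by
      rw [hMfact, Matrix.mulVecLin_mul]
      exact LinearMap.range_comp_le_range _ _
    have hMinj : ∀ v, v ∈ V → M *ᵥ v = 0 → v = 0 := by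
      intro v hv h0
      have hQv : Q *ᵥ v = v := by
        obtain ⟨u, hu⟩ := hv
        rw [← hu]
        show Q *ᵥ (Q *ᵥ u) = Q *ᵥ u
        rw [Matrix.mulVec_mulVec, hQi]
      have hMv : M *ᵥ v = Q *ᵥ (P *ᵥ v) + (2:ℂ) • v := by
        rw [hMdef, Matrix.add_mulVec, Matrix.smul_mulVec, hQv]
        congr 1
        rw [← Matrix.mulVec_mulVec, ← Matrix.mulVec_mulVec, hQv]
      have hdot : (0:ℝ) = (dotProduct (star v) (P *ᵥ v)).re
          + 2 * (dotProduct (star v) v).re := by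
        have h1 : dotProduct (star v) (M *ᵥ v) = 0 := by
          rw [h0, dotProduct_zero]
        rw [hMv, dotProduct_add, dotProduct_smul] at h1
        have h2 : dotProduct (star v) (Q *ᵥ (P *ᵥ v))
            = dotProduct (star v) (P *ᵥ v) := by
          rw [Matrix.dotProduct_mulVec, show star v ᵥ* Q = star v from by
            rw [← hQh.eq, ← Matrix.star_mulVec, hQv]]
        rw [h2] at h1
        have h3 := congrArg Complex.re h1
        simp only [Complex.add_re, Complex.zero_re, smul_eq_mul, Complex.mul_re] at h3
        norm_num at h3
        linarith [h3]
      have hnn1 := proj_dot_re_nonneg hPh hPi v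
      have hzero : ∑ i, Complex.normSq (v i) = 0 := by
        have hnn2 : 0 ≤ (dotProduct (star v) v).re := by
          rw [dot_star_self_re]
          exact Finset.sum_nonneg fun i _ => Complex.normSq_nonneg _
        have := dot_star_self_re v
        linarith
      funext i
      have := (Finset.sum_eq_zero_iff_of_nonneg
        (fun i _ => Complex.normSq_nonneg (v i))).mp hzero i (Finset.mem_univ i)
      exact Complex.normSq_eq_zero.mp this
    have hL : LinearMap.ker (M.mulVecLin ∘ₗ V.subtype) = ⊥ := by
      rw [LinearMap.ker_eq_bot']
      intro v hv
      exact Subtype.ext (hMinj v v.2 hv)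
    have hfin1 : Module.finrank ℂ (LinearMap.range (M.mulVecLin ∘ₗ V.subtype))
        = Module.finrank ℂ V := by
      have := LinearMap.finrank_range_add_finrank_ker (M.mulVecLin ∘ₗ V.subtype)
      rw [hL, finrank_bot] at this
      simpa using this
    have hle1 : LinearMap.range (M.mulVecLin ∘ₗ V.subtype) ≤ LinearMap.range M.mulVecLin :=
      LinearMap.range_comp_le_range _ _
    have heq : Module.finrank ℂ (LinearMap.range M.mulVecLin) = Module.finrank ℂ V :=
      le_antisymm (Submodule.finrank_mono hrangeM_le)
        (by rw [← hfin1]; exact Submodule.finrank_mono hle1)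
    have h9 : M.rank = Q.rank := heq
    rw [h9, hQrank]
  have hcard : Fintype.card {i // hMh.eigenvalues i ≠ 0} = Dρ := by
    rw [← hMh.rank_eq_card_non_zero_eigs, hMrank]
  set e : Fin Dρ ≃ {i // hMh.eigenvalues i ≠ 0} := (Fintype.equivFinOfCardEq hcard).symm with he
  set b : Fin Dρ → (Fin N → ℂ) := fun k => ⇑(hMh.eigenvectorBasis (e k).1) with hb
  set ν : Fin Dρ → ℝ := fun k => hMh.eigenvalues (e k).1 - 2 with hν
  -- orthonormality
  have hortho : ∀ k l, star (b k) ⬝ᵥ b l = if k = l then 1 else 0 := by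
    intro k l
    have h := orthonormal_iff_ite.mp hMh.eigenvectorBasis.orthonormal (e k).1 (e l).1
    rw [EuclideanSpace.inner_eq_star_dotProduct, dotProduct_comm] at h
    by_cases hkl : k = l
    · subst hkl; rw [if_pos rfl] at h ⊢; exact h
    · have hne : (e k).1 ≠ (e l).1 := fun hh => hkl (e.injective (Subtype.ext hh))
      simp only [hne, if_false, hkl] at h ⊢
      exact h
  -- membership
  have hmem : ∀ k, b k ∈ V := by
    intro k
    have hMb := hMh.mulVec_eigenvectorBasis (e k).1
    have hne := (e k).2
    have hrw : b k = (hMh.eigenvalues (e k).1)⁻¹ • (M *ᵥ b k) := by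
      show b k = (hMh.eigenvalues (e k).1)⁻¹ • (M *ᵥ ⇑(hMh.eigenvectorBasis (e k).1))
      rw [hMb, smul_smul, inv_mul_cancel₀ hne, one_smul]
    have h2 : M *ᵥ b k = Q.mulVecLin ((P * Q + (2:ℂ) • 1) *ᵥ b k) := by
      rw [Matrix.mulVecLin_apply, Matrix.mulVec_mulVec, ← hMfact]
    rw [hrw, h2]
    exact V.smul_of_tower_mem _ (LinearMap.mem_range_self Q.mulVecLin _)
  have hQb : ∀ k, Q *ᵥ b k = b k := by
    intro k
    obtain ⟨u, hu⟩ := hmem k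
    rw [← hu]
    show Q *ᵥ (Q *ᵥ u) = Q *ᵥ u
    rw [Matrix.mulVec_mulVec, hQi]
  -- span
  have hspan : Submodule.span ℂ (Set.range b) = V := by
    have hle : Submodule.span ℂ (Set.range b) ≤ V := by
      rw [Submodule.span_le]
      rintro x ⟨k, rfl⟩
      exact hmem k
    have hON : Orthonormal ℂ (fun k => hMh.eigenvectorBasis (e k).1) :=
      hMh.eigenvectorBasis.orthonormal.comp _ (fun k l hkl => e.injective (Subtype.ext hkl))
    have hLI : LinearIndependent ℂ b := hON.linearIndependent.map' (WithLp.linearEquiv 2 ℂ (Fin N → ℂ)).toLinearMap (WithLp.linearEquiv 2 ℂ (Fin N → ℂ)).ker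
    have hfr : Module.finrank ℂ (Submodule.span ℂ (Set.range b)) = Dρ := by
      rw [finrank_span_eq_card hLI, Fintype.card_fin]
    have hfrV : Module.finrank ℂ V = Dρ := by
      have : Module.finrank ℂ V = Q.rank := rfl
      rw [this, hQrank]
    exact Submodule.eq_of_le_of_finrank_le hle (by rw [hfr, hfrV])
  -- eigenvector relation
  have hQPb : ∀ k, Q *ᵥ (P *ᵥ b k) = ((ν k : ℝ) : ℂ) • b k := by
    intro k
    have hMb : M *ᵥ b k = (hMh.eigenvalues (e k).1) • b k := hMh.mulVec_eigenvectorBasis (e k).1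
    have h1 : M *ᵥ b k = Q *ᵥ (P *ᵥ b k) + (2:ℂ) • b k := by
      rw [hMdef, Matrix.add_mulVec, Matrix.smul_mulVec, hQb k]
      congr 1
      rw [← Matrix.mulVec_mulVec, ← Matrix.mulVec_mulVec, hQb k]
    have h2 : Q *ᵥ (P *ᵥ b k) = (hMh.eigenvalues (e k).1) • b k - (2:ℂ) • b k := by
      rw [← hMb, h1]; abel
    rw [RCLike.real_smul_eq_coe_smul (K := ℂ)] at h2
    have h3 : ((ν k : ℝ) : ℂ) = (hMh.eigenvalues (e k).1 : ℂ) - 2 := by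
      rw [hν]; push_cast; ring
    rw [h2, h3, sub_smul]
    rfl
  have hc : ∀ k, star (b k) ⬝ᵥ (P *ᵥ b k) = ((ν k : ℝ) : ℂ) := by
    intro k
    have h1 : star (b k) ⬝ᵥ (P *ᵥ b k) = star (b k) ⬝ᵥ (Q *ᵥ (P *ᵥ b k)) := by
      conv_rhs => rw [Matrix.dotProduct_mulVec]
      rw [show star (b k) ᵥ* Q = star (b k) from by
        rw [← hQh.eq, ← Matrix.star_mulVec, hQb k]]
    rw [h1, hQPb k, dotProduct_smul, hortho k k]
    simp
  -- sum transfer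
  have hsum : ∀ f : Fin N → ℂ, (∀ i, hMh.eigenvalues i = 0 → f i = 0) →
      ∑ i, f i = ∑ k, f (e k).1 := by
    intro f hf
    have h1 : ∑ i ∈ Finset.univ.filter (fun i => hMh.eigenvalues i ≠ 0), f i = ∑ i, f i :=
      Finset.sum_filter_of_ne (fun i _ hfi h0 => hfi (hf i h0))
    have h2 : ∑ i ∈ Finset.univ.filter (fun i => hMh.eigenvalues i ≠ 0), f i
        = ∑ x : {i // hMh.eigenvalues i ≠ 0}, f x.1 :=
      Finset.sum_subtype _ (by simp) f
    have h3 : ∑ x : {i // hMh.eigenvalues i ≠ 0}, f x.1 = ∑ k, f (e k).1 :=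
      (Equiv.sum_comp e (fun x => f x.1)).symm
    rw [← h1, h2, h3]
  -- trace identities
  have htrMQ : Q * M = M := by
    rw [hMdef, Matrix.mul_add]
    congr 1
    · rw [← Matrix.mul_assoc, ← Matrix.mul_assoc, hQi]
    · rw [mul_smul_comm, hQi]
  have htrQM : M * Q = M := by
    rw [hMdef, Matrix.add_mul]
    congr 1
    · rw [Matrix.mul_assoc, hQi]
    · rw [smul_mul_assoc, hQi]
  have htrPQc : (P * Q).trace = ∑ k, ((ν k : ℝ) : ℂ) := by
    have hcyc : (Q * P * Q).trace = (P * Q).trace := by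
      rw [Matrix.trace_mul_comm (Q * P) Q, ← Matrix.mul_assoc, hQi, Matrix.trace_mul_comm Q P]
    have hQPQ : Q * P * Q = M - (2:ℂ) • Q := by
      rw [hMdef, add_sub_cancel_right]
    calc (P * Q).trace = (Q * P * Q).trace := hcyc.symm
      _ = M.trace - (2:ℂ) * Q.trace := by
          rw [hQPQ, Matrix.trace_sub, Matrix.trace_smul, smul_eq_mul]
      _ = (∑ k, ((hMh.eigenvalues (e k).1 : ℝ) : ℂ)) - 2 * Dρ := by
          rw [herm_trace hMh, htrQ, hsum (fun i => ((hMh.eigenvalues i : ℝ) : ℂ))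
            (fun i h0 => by simp [h0])]
      _ = ∑ k, ((ν k : ℝ) : ℂ) := by
          rw [hν]
          push_cast
          rw [Finset.sum_sub_distrib, Finset.sum_const, card_univ, Fintype.card_fin,
            nsmul_eq_mul]
          ring
  have htrPQ : ((P * Q).trace).re = ∑ k, ν k := by
    rw [htrPQc, Complex.re_sum]
    simp
  have htrPQPQc : (P * Q * P * Q).trace = ∑ k, ((ν k : ℝ) : ℂ) ^ 2 := by
    have hQPQ : Q * P * Q = M - (2:ℂ) • Q := by
      rw [hMdef, add_sub_cancel_right]
    have hsq : (Q * P * Q) * (Q * P * Q) = M * M - (4:ℂ) • M + (4:ℂ) • Q := by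
      rw [hQPQ, Matrix.sub_mul, Matrix.mul_sub, Matrix.mul_sub, mul_smul_comm, htrQM,
        smul_mul_assoc, htrMQ, smul_mul_assoc, mul_smul_comm, hQi, smul_smul]
      module
    have hcyc : ((Q * P * Q) * (Q * P * Q)).trace = (P * Q * P * Q).trace := by
      have h1 : (Q * P * Q) * (Q * P * Q) = Q * (P * Q * P * Q) := by
        simp only [Matrix.mul_assoc]
        rw [← Matrix.mul_assoc Q Q, hQi]
      rw [h1, Matrix.trace_mul_comm, Matrix.mul_assoc (P * Q * P) Q Q, hQi]
    rw [← hcyc, hsq, Matrix.trace_add, Matrix.trace_sub, Matrix.trace_smul, Matrix.trace_smul,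
      herm_trace_sq hMh, herm_trace hMh, htrQ]
    rw [hsum (fun i => ((hMh.eigenvalues i : ℝ) : ℂ) ^ 2) (fun i h0 => by simp [h0]),
      hsum (fun i => ((hMh.eigenvalues i : ℝ) : ℂ)) (fun i h0 => by simp [h0])]
    have hνc : ∀ k ∈ (univ : Finset (Fin Dρ)), ((ν k : ℝ) : ℂ) ^ 2
        = (hMh.eigenvalues (e k).1 : ℂ) ^ 2 - 4 * (hMh.eigenvalues (e k).1 : ℂ) + 4 := by
      intro k _
      rw [hν]; push_cast; ring
    rw [Finset.sum_congr rfl hνc, Finset.sum_add_distrib, Finset.sum_sub_distrib,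
      ← Finset.mul_sum, Finset.sum_const, card_univ, Fintype.card_fin, nsmul_eq_mul,
      smul_eq_mul, smul_eq_mul]
    ring
  have htrPQPQ : ((P * Q * P * Q).trace).re = ∑ k, (ν k) ^ 2 := by
    rw [htrPQPQc, Complex.re_sum]
    refine Finset.sum_congr rfl fun k _ => ?_
    rw [show ((ν k : ℝ) : ℂ) ^ 2 = (((ν k) ^ 2 : ℝ) : ℂ) by push_cast; ring, Complex.ofReal_re]
  -- real bounds on ν
  have hν0 : ∀ k, 0 ≤ ν k := by
    intro k
    have h1 : ν k = (star (b k) ⬝ᵥ (P *ᵥ b k)).re := by rw [hc k, Complex.ofReal_re]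
    rw [h1]; exact proj_dot_re_nonneg hPh hPi _
  have hν1 : ∀ k, ν k ≤ 1 := by
    intro k
    have hPh' : (1 - P).IsHermitian := by
      rw [Matrix.IsHermitian, Matrix.conjTranspose_sub, Matrix.conjTranspose_one, hPh.eq]
    have hPi' : (1 - P) * (1 - P) = 1 - P := by
      have hx : (1 - P) * (1 - P) = 1 - P - P + P * P := by noncomm_ring
      rw [hx, hPi]
      abel
    have h0 := proj_dot_re_nonneg hPh' hPi' (b k)
    have h1 : (1 - P) *ᵥ b k = b k - P *ᵥ b k := by
      rw [Matrix.sub_mulVec, Matrix.one_mulVec]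
    rw [h1, dotProduct_sub] at h0
    have h2 : star (b k) ⬝ᵥ b k = 1 := by simpa using hortho k k
    rw [h2, hc k] at h0
    simp only [Complex.sub_re, Complex.one_re, Complex.ofReal_re] at h0
    linarith
  -- final assembly
  set F := Finset.univ.filter (fun k => lam < |ν k - G₂|) with hF
  have hFeq : Finset.univ.filter
      (fun k => lam < |(star (b k) ⬝ᵥ P.mulVec (b k)).re - G₂|) = F := by
    rw [hF]
    apply Finset.filter_congr
    intro k _
    rw [hc k, Complex.ofReal_re]
  have hm : (F.card : ℝ) / Dρ ≤ fmax := by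
    have := hbasis b hortho hmem hspan
    rwa [hFeq] at this
  have hcardle : F.card ≤ Dρ := by
    calc F.card ≤ (univ : Finset (Fin Dρ)).card :=
          Finset.card_le_card (Finset.filter_subset _ _)
      _ = Dρ := by rw [card_univ, Fintype.card_fin]
  have hGsum : ∑ k, ν k = G₂ * Dρ := by
    rw [hG, ← htrPQ]
    field_simp
  have hGval : G₂ = (∑ k, ν k) / Dρ := by rw [hG, htrPQ]
  have hG0 : 0 ≤ G₂ := by
    rw [hGval]
    exact div_nonneg (Finset.sum_nonneg fun k _ => hν0 k) (le_of_lt hD0)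
  have hG1 : G₂ ≤ 1 := by
    have h1 : ∑ k, ν k ≤ (Dρ : ℝ) := by
      calc ∑ k, ν k ≤ ∑ _k : Fin Dρ, (1:ℝ) := Finset.sum_le_sum fun k _ => hν1 k
        _ = Dρ := by simp
    rw [hGval, div_le_one hD0]
    exact h1
  have hterm : ∀ k, (ν k - G₂) ^ 2 ≤ if k ∈ F then 1 else lam ^ 2 := by
    intro k
    by_cases hk : k ∈ F
    · simp only [hk, if_true]
      have h1 : |ν k - G₂| ≤ 1 :=
        abs_le.mpr ⟨by linarith [hν0 k, hν1 k], by linarith [hν0 k, hν1 k]⟩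
      calc (ν k - G₂) ^ 2 = |ν k - G₂| ^ 2 := (_root_.sq_abs _).symm
        _ ≤ 1 := pow_le_one₀ (abs_nonneg _) h1
    · simp only [hk, if_false]
      have h1 : |ν k - G₂| ≤ lam := by
        rw [hF] at hk
        simp only [Finset.mem_filter, Finset.mem_univ, true_and, not_lt] at hk
        exact hk
      calc (ν k - G₂) ^ 2 = |ν k - G₂| ^ 2 := (_root_.sq_abs _).symm
        _ ≤ lam ^ 2 := pow_le_pow_left₀ (abs_nonneg _) h1 2
  have hsum_bound : ∑ k, (ν k - G₂) ^ 2 ≤ (F.card : ℝ) + ((Dρ : ℝ) - F.card) * lam ^ 2 := by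
    calc ∑ k, (ν k - G₂) ^ 2 ≤ ∑ k, (if k ∈ F then (1:ℝ) else lam ^ 2) :=
          Finset.sum_le_sum fun k _ => hterm k
      _ = (F.card : ℝ) + ((Dρ : ℝ) - F.card) * lam ^ 2 := by
          rw [← Finset.sum_filter_add_sum_filter_not univ (fun k => k ∈ F)]
          have e1 : univ.filter (fun k => k ∈ F) = F := by ext k; simp
          have e2 : univ.filter (fun k => ¬ k ∈ F) = univ \ F := by ext k; simp
          rw [Finset.sum_congr e1 (fun k hk => if_pos hk),
            Finset.sum_congr e2 (fun k hk => if_neg (Finset.mem_sdiff.mp hk).2),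
            Finset.sum_const, Finset.sum_const,
            Finset.card_sdiff_of_subset (Finset.subset_univ F), card_univ, Fintype.card_fin,
            nsmul_eq_mul, nsmul_eq_mul, mul_one, Nat.cast_sub hcardle]
  have hexp : ∑ k, (ν k - G₂) ^ 2 = (∑ k, (ν k) ^ 2) - Dρ * G₂ ^ 2 := by
    have h1 : ∀ k ∈ (univ : Finset (Fin Dρ)), (ν k - G₂) ^ 2
        = (ν k) ^ 2 - 2 * G₂ * (ν k) + G₂ ^ 2 := fun k _ => by ring
    rw [Finset.sum_congr rfl h1, Finset.sum_add_distrib, Finset.sum_sub_distrib,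
      ← Finset.mul_sum, hGsum, Finset.sum_const, card_univ, Fintype.card_fin, nsmul_eq_mul]
    ring
  have hσval : σsq = (∑ k, (ν k - G₂) ^ 2) / Dρ := by
    rw [hσ, htrPQPQ, hexp]
    field_simp
  rw [hσval, div_le_iff₀ hD0]
  calc ∑ k, (ν k - G₂) ^ 2 ≤ (F.card : ℝ) + ((Dρ : ℝ) - F.card) * lam ^ 2 := hsum_bound
    _ = (lam ^ 2 + (1 - lam ^ 2) * ((F.card : ℝ) / Dρ)) * Dρ := by
        field_simp
        ring
    _ ≤ (lam ^ 2 + (1 - lam ^ 2) * fmax) * Dρ := by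
        have h1 : (0:ℝ) ≤ 1 - lam ^ 2 :=
          sub_nonneg.mpr (pow_le_one₀ hlam0 (le_of_lt hlam1))
        have h2 : (1 - lam ^ 2) * ((F.card : ℝ) / Dρ) ≤ (1 - lam ^ 2) * fmax :=
          mul_le_mul_of_nonneg_left hm h1
        exact mul_le_mul_of_nonneg_right (add_le_add_right h2 _) (le_of_lt hD0)
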